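/- Let X be an invertible object in a symmetric monoidal category. For any tensor word w in n variables each appearing exactly once, and any even permutation σ ∈ Σ_n, the automorphism of w(X,...,X) obtained from the unique coherence natural isomorphism F_w → F_{wσ} (evaluated at (X,...,X)) is the identity. In particular, the cyclic permutation map (X ⊗ X) ⊗ X → (X ⊗ X) ⊗ X given by the symmetry t_{X⊗X,X} followed by the associator equals the identity. -/

import Mathlib

open CategoryTheory MonoidalCategory

namespace CyclicPermAux

variable {C : Type*} [Category C] [MonoidalCategory C]

/-- Left action of a unit endomorphism on an object. -/
def cc (s : 𝟙_ C ⟶ 𝟙_ C) (A : C) : A ⟶ A :=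
  (λ_ A).inv ≫ (s ▷ A) ≫ (λ_ A).hom

theorem cc_natural (s : 𝟙_ C ⟶ 𝟙_ C) {A B : C} (h : A ⟶ B) :
    cc s A ≫ h = h ≫ cc s B := by
  simp only [cc, Category.assoc]
  rw [← leftUnitor_naturality, ← whisker_exchange_assoc, leftUnitor_inv_naturality_assoc]

theorem cc_comp (s t : 𝟙_ C ⟶ 𝟙_ C) (A : C) :
    cc s A ≫ cc t A = cc (s ≫ t) A := by
  simp [cc, comp_whiskerRight]

theorem cc_id (A : C) : cc (𝟙 (𝟙_ C)) A = 𝟙 A := by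
  simp [cc]

theorem cc_whiskerRight (s : 𝟙_ C ⟶ 𝟙_ C) (A X : C) :
    cc s A ▷ X = cc s (A ⊗ X) := by
  simp only [cc, comp_whiskerRight, leftUnitor_tensor_hom, leftUnitor_tensor_inv, Category.assoc]
  rw [← associator_naturality_left_assoc]
  simp

theorem cc_whiskerLeft [BraidedCategory C] (s : 𝟙_ C ⟶ 𝟙_ C) (A X : C) :
    X ◁ cc s A = cc s (X ⊗ A) := by
  have hswap : X ◁ s = (ρ_ X).hom ≫ cc s X ≫ (ρ_ X).inv := by
    have h1 : X ◁ s ≫ (β_ X (𝟙_ C)).hom = (β_ X (𝟙_ C)).hom ≫ s ▷ X :=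
      BraidedCategory.braiding_naturality_right X s
    have h2 : (β_ X (𝟙_ C)).hom = (ρ_ X).hom ≫ (λ_ X).inv := by
      rw [← braiding_leftUnitor X]; simp
    simp only [cc]
    rw [← Category.comp_id (X ◁ s), ← Iso.hom_inv_id (β_ X (𝟙_ C)), ← Category.assoc, h1, h2]
    simp [Category.assoc]
  have key : X ◁ cc s A = cc s X ▷ A := by
    calc X ◁ cc s A
        = X ◁ (λ_ A).inv ≫ X ◁ (s ▷ A) ≫ X ◁ (λ_ A).hom := by
          simp [cc, MonoidalCategory.whiskerLeft_comp]
      _ = X ◁ (λ_ A).inv ≫ ((α_ X (𝟙_ C) A).inv ≫ ((X ◁ s) ▷ A) ≫ (α_ X (𝟙_ C) A).hom)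
            ≫ X ◁ (λ_ A).hom := by
          rw [whisker_assoc_symm]
      _ = cc s X ▷ A := by
          rw [hswap]
          simp only [comp_whiskerRight, Category.assoc]
          rw [triangle]
          have htri : X ◁ (λ_ A).inv ≫ (α_ X (𝟙_ C) A).inv = (ρ_ X).inv ▷ A := by
            rw [← triangle_assoc_comp_right_inv]; simp
          rw [reassoc_of% htri]
          simp
  rw [key, cc_whiskerRight]

/-- Every endomorphism of an invertible object is "scalar": it is the left unit
action of an endomorphism of the tensor unit. -/
theorem scalar_of_invertible {W Z : C} (u : 𝟙_ C ≅ W ⊗ Z) (u' : 𝟙_ C ≅ Z ⊗ W)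
    (f : Z ⟶ Z) : f = cc (u'.hom ≫ (f ▷ W) ≫ u'.inv) Z := by
  set s : 𝟙_ C ⟶ 𝟙_ C := u'.hom ≫ (f ▷ W) ≫ u'.inv with hs
  have hslide : (f ▷ W) ≫ u'.inv = u'.inv ≫ s := by
    rw [hs]; simp
  set ψ : Z ≅ Z :=
    (ρ_ Z).symm ≪≫ whiskerLeftIso Z u ≪≫ (α_ Z W Z).symm ≪≫
      whiskerRightIso u'.symm Z ≪≫ λ_ Z with hψ
  have main : f ≫ ψ.hom = ψ.hom ≫ cc s Z := by
    have e1 : f ≫ (ρ_ Z).inv = (ρ_ Z).inv ≫ (f ▷ 𝟙_ C) := by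
      rw [rightUnitor_inv_naturality]
    have e2 : (f ▷ 𝟙_ C) ≫ (Z ◁ u.hom) = (Z ◁ u.hom) ≫ (f ▷ (W ⊗ Z)) :=
      (whisker_exchange f u.hom).symm
    have e3 : (f ▷ (W ⊗ Z)) ≫ (α_ Z W Z).inv = (α_ Z W Z).inv ≫ (f ▷ W ▷ Z) :=
      associator_inv_naturality_left f W Z
    have e4 : (f ▷ W ▷ Z) ≫ (u'.inv ▷ Z) = (u'.inv ▷ Z) ≫ (s ▷ Z) := by
      rw [← comp_whiskerRight, hslide, comp_whiskerRight]
    have e5 : (s ▷ Z) ≫ (λ_ Z).hom = (λ_ Z).hom ≫ cc s Z := by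
      simp [cc]
    simp only [hψ, Iso.trans_hom, Iso.symm_hom, whiskerLeftIso_hom, whiskerRightIso_hom,
      Category.assoc]
    rw [reassoc_of% e1, reassoc_of% e2, reassoc_of% e3, reassoc_of% e4, e5]
  have comm : cc s Z ≫ ψ.hom = ψ.hom ≫ cc s Z := cc_natural s ψ.hom
  have : f ≫ ψ.hom = cc s Z ≫ ψ.hom := by rw [main, ← comm]
  exact (cancel_mono ψ.hom).mp this

end CyclicPermAux

/-- For an invertible object `X` in a symmetric monoidal category, the automorphism of
`(X ⊗ X) ⊗ X` coming from an even (cyclic) permutation of the factors is the identity: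
the symmetry `t_{X⊗X,X} : (X ⊗ X) ⊗ X ⟶ X ⊗ (X ⊗ X)` followed by the (inverse) associator
`X ⊗ (X ⊗ X) ⟶ (X ⊗ X) ⊗ X` equals the identity. -/
theorem cyclic_permutation_id {C : Type*} [Category C] [MonoidalCategory C]
    [SymmetricCategory C] (X : C) (hX : ∃ Y : C, Nonempty (𝟙_ C ≅ Y ⊗ X)) :
    (β_ (X ⊗ X) X).hom ≫ (α_ X X X).inv = 𝟙 ((X ⊗ X) ⊗ X) := by
  classical
  open CyclicPermAux in
  obtain ⟨Y, ⟨e⟩⟩ := hX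
  -- `X ⊗ X` is invertible with inverse `Y ⊗ Y`.
  set u : 𝟙_ C ≅ (Y ⊗ Y) ⊗ (X ⊗ X) :=
    e ≪≫ whiskerLeftIso Y ((λ_ X).symm ≪≫ whiskerRightIso e X ≪≫ α_ Y X X) ≪≫
      (α_ Y Y (X ⊗ X)).symm with hu
  set u' : 𝟙_ C ≅ (X ⊗ X) ⊗ (Y ⊗ Y) := u ≪≫ β_ (Y ⊗ Y) (X ⊗ X) with hu'
  set b : X ⊗ X ⟶ X ⊗ X := (β_ X X).hom with hb
  set s : 𝟙_ C ⟶ 𝟙_ C := u'.hom ≫ (b ▷ (Y ⊗ Y)) ≫ u'.inv with hs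
  have hbs : b = cc s (X ⊗ X) := scalar_of_invertible u u' b
  -- `s` squares to the identity since the braiding is a symmetry.
  have hs2 : s ≫ s = 𝟙 (𝟙_ C) := by
    rw [hs]
    slice_lhs 3 4 => rw [Iso.inv_hom_id]
    simp only [Category.id_comp, Category.assoc]
    slice_lhs 2 3 => rw [← comp_whiskerRight]
    rw [hb]
    rw [SymmetricCategory.symmetry]
    simp
  -- hexagon: decompose the braiding with a tensor factor.
  have hex : (β_ (X ⊗ X) X).hom =
      (α_ X X X).hom ≫ (X ◁ b) ≫ (α_ X X X).inv ≫ (b ▷ X) ≫ (α_ X X X).hom := by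
    have h := BraidedCategory.hexagon_reverse X X X
    calc (β_ (X ⊗ X) X).hom
        = (α_ X X X).hom ≫ ((α_ X X X).inv ≫ (β_ (X ⊗ X) X).hom ≫ (α_ X X X).inv)
            ≫ (α_ X X X).hom := by simp
      _ = _ := by rw [h]; simp [hb]
  rw [hex]
  simp only [Category.assoc, Iso.hom_inv_id, Category.comp_id]
  -- rewrite both braiding factors as central scalar actions
  rw [hbs, cc_whiskerLeft, cc_whiskerRight]
  have hnat : cc s (X ⊗ (X ⊗ X)) ≫ (α_ X X X).inv =
      (α_ X X X).inv ≫ cc s ((X ⊗ X) ⊗ X) := cc_natural s (α_ X X X).inv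
  rw [reassoc_of% hnat]
  rw [Iso.hom_inv_id_assoc, cc_comp, hs2, cc_id]
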